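/- For every β > 0 there exists a constant C₁ > 0, depending only on β, such that for all integers k ≥ 1 and 0 ≤ n' ≤ k and all reals t* ≤ t' ≤ t: the integral over the set {(t₁,…,t_k) ∈ ℝ^k : t > t₁ > ⋯ > t_k > t*, t_{n'} > t' > t_{n'+1}} (conventions t₀ = t, t_{k+1} = t*) of ∫_{ℝ^{3k}} ∏_{i=1}^{k} e^{−(β/4)|v_i|²} [ (1+k)|v_i| + √(2k(1+k)/(eβ)) ] dv₁⋯dv_k is at most e · C₁^k (t − t')^{n'} (t' − t*)^{k−n'}. -/

import Mathlib

open MeasureTheory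
open scoped ENNReal

local notation "E3V" => EuclideanSpace ℝ (Fin 3)

lemma sortPerm_unique {k : ℕ} {T : Fin k → ℝ} {ρ₁ ρ₂ : Equiv.Perm (Fin k)}
    (h1 : StrictAnti (T ∘ ρ₁)) (h2 : StrictAnti (T ∘ ρ₂)) : ρ₁ = ρ₂ := by
  have hwf : WellFoundedLT (Fin k) := inferInstance
  have key : ∀ (σ τ : Equiv.Perm (Fin k)), StrictAnti (T ∘ σ) → StrictAnti (T ∘ τ) →
      StrictMono (fun i => τ.symm (σ i)) := by
    intro σ τ hσ hτ i j hij
    have h : T (σ j) < T (σ i) := hσ hij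
    have h' : (T ∘ τ) (τ.symm (σ j)) < (T ∘ τ) (τ.symm (σ i)) := by
      simpa [Function.comp] using h
    exact (hτ.lt_iff_gt).mp h'
  have m1 := key ρ₁ ρ₂ h1 h2
  have m2 := key ρ₂ ρ₁ h2 h1
  have hfix : ∀ i, ρ₂.symm (ρ₁ i) = i := by
    intro i
    have a1 : i ≤ ρ₂.symm (ρ₁ i) := m1.le_apply
    have a2 : ρ₂.symm (ρ₁ i) ≤ ρ₁.symm (ρ₂ (ρ₂.symm (ρ₁ i))) := m2.le_apply
    rw [Equiv.apply_symm_apply, Equiv.symm_apply_apply] at a2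
    exact le_antisymm a2 a1
  ext i
  have h := congrArg ρ₂ (hfix i)
  rw [Equiv.apply_symm_apply] at h
  exact congrArg Fin.val h

lemma comp_perm_measurePreserving {k : ℕ} (ρ : Equiv.Perm (Fin k)) :
    MeasurePreserving (fun T : Fin k → ℝ => T ∘ ρ) volume volume := by
  have hcoe : ⇑(MeasurableEquiv.piCongrLeft (fun _ : Fin k => ℝ) ρ.symm)
      = fun T : Fin k → ℝ => T ∘ ρ := by
    funext T
    funext j
    rw [MeasurableEquiv.coe_piCongrLeft]
    have h := Equiv.piCongrLeft_apply_apply (fun _ : Fin k => ℝ) ρ.symm T (ρ j)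
    simpa using h
  have := volume_measurePreserving_piCongrLeft (fun _ : Fin k => ℝ) ρ.symm
  rwa [hcoe] at this

lemma strictAnti_measurableSet {k : ℕ} :
    MeasurableSet {T : Fin k → ℝ | StrictAnti T} := by
  have : {T : Fin k → ℝ | StrictAnti T}
      = ⋂ (i : Fin k), ⋂ (j : Fin k), ⋂ (_ : i < j), {T : Fin k → ℝ | T j < T i} := by
    ext T
    simp only [Set.mem_iInter, Set.mem_setOf_eq]
    exact ⟨fun h i j hij => h hij, fun h a b hab => h a b hab⟩
  rw [this]
  exact MeasurableSet.iInter fun i => MeasurableSet.iInter fun j =>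
    MeasurableSet.iInter fun _ => measurableSet_lt (measurable_pi_apply j) (measurable_pi_apply i)

lemma volume_ordered_twoBlock_le {k n' : ℕ} (hn : n' ≤ k) (tstar t' t : ℝ) :
    ((n'.factorial : ℝ≥0∞) * ((k - n').factorial : ℝ≥0∞)) *
      volume {T : Fin k → ℝ |
        (∀ i : Fin k, T i ∈ Set.Ioo (if (i:ℕ) < n' then t' else tstar)
            (if (i:ℕ) < n' then t else t')) ∧ StrictAnti T} ≤
      ENNReal.ofReal (t - t') ^ n' * ENNReal.ofReal (t' - tstar) ^ (k - n') := by
  classical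
  set l : Fin k → ℝ := fun i => if (i:ℕ) < n' then t' else tstar with hl
  set u : Fin k → ℝ := fun i => if (i:ℕ) < n' then t else t' with hu
  set A : Set (Fin k → ℝ) := {T | (∀ i : Fin k, T i ∈ Set.Ioo (l i) (u i)) ∧ StrictAnti T}
    with hA
  have hAmeas : MeasurableSet A := by
    have h1 : {T : Fin k → ℝ | ∀ i : Fin k, T i ∈ Set.Ioo (l i) (u i)}
        = Set.univ.pi fun i => Set.Ioo (l i) (u i) := by
      ext T; simp [Set.mem_univ_pi]
    have : A = {T : Fin k → ℝ | ∀ i : Fin k, T i ∈ Set.Ioo (l i) (u i)}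
        ∩ {T | StrictAnti T} := rfl
    rw [this, h1]
    exact (MeasurableSet.univ_pi fun i => measurableSet_Ioo).inter strictAnti_measurableSet
  have hk : n' + (k - n') = k := by omega
  set E : (Fin n' ⊕ Fin (k - n')) ≃ Fin k := finSumFinEquiv.trans (finCongr hk) with hE
  set φ : Equiv.Perm (Fin n') × Equiv.Perm (Fin (k - n')) → Equiv.Perm (Fin k) :=
    fun p => (Equiv.permCongr E) (Equiv.sumCongr p.1 p.2) with hφ
  have hblock : ∀ p i, ((φ p i : ℕ) < n' ↔ (i:ℕ) < n') := by
    intro p i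
    rcases h : E.symm i with a | b
    · have hi : i = E (Sum.inl a) := by rw [← h, Equiv.apply_symm_apply]
      have h1 : (i : ℕ) = (a : ℕ) := by rw [hi]; simp [hE]
      have h2 : φ p i = E (Sum.inl (p.1 a)) := by
        simp [hφ, Equiv.permCongr_apply, h]
      have h3 : ((φ p i : Fin k) : ℕ) = (p.1 a : ℕ) := by rw [h2]; simp [hE]
      rw [h1, h3]
      simp [a.isLt, (p.1 a).isLt]
    · have hi : i = E (Sum.inr b) := by rw [← h, Equiv.apply_symm_apply]
      have h1 : (i : ℕ) = n' + (b : ℕ) := by rw [hi]; simp [hE]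
      have h2 : φ p i = E (Sum.inr (p.2 b)) := by
        simp [hφ, Equiv.permCongr_apply, h]
      have h3 : ((φ p i : Fin k) : ℕ) = n' + (p.2 b : ℕ) := by rw [h2]; simp [hE]
      rw [h1, h3]
      omega
  have hblock' : ∀ p (i : Fin k), (((φ p).symm i : ℕ) < n' ↔ (i:ℕ) < n') := by
    intro p i
    have := hblock p ((φ p).symm i)
    rw [Equiv.apply_symm_apply] at this
    exact this.symm
  have hφinj : Function.Injective φ := by
    intro p q h
    have h' : Equiv.sumCongr p.1 p.2 = Equiv.sumCongr q.1 q.2 :=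
      (Equiv.permCongr E).injective h
    have h1 : p.1 = q.1 := by
      ext a
      have := DFunLike.congr_fun h' (Sum.inl a)
      simp only [Equiv.sumCongr_apply, Sum.map_inl, Sum.inl.injEq] at this
      exact congrArg Fin.val this
    have h2 : p.2 = q.2 := by
      ext b
      have := DFunLike.congr_fun h' (Sum.inr b)
      simp only [Equiv.sumCongr_apply, Sum.map_inr, Sum.inr.injEq] at this
      exact congrArg Fin.val this
    exact Prod.ext h1 h2
  set F : Equiv.Perm (Fin n') × Equiv.Perm (Fin (k - n')) → Set (Fin k → ℝ) :=
    fun p => (fun T => T ∘ φ p) ⁻¹' A with hF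
  have hFvol : ∀ p, volume (F p) = volume A := fun p =>
    (comp_perm_measurePreserving (φ p)).measure_preimage hAmeas.nullMeasurableSet
  have hFdisj : Pairwise (Function.onFun Disjoint F) := by
    intro p q hpq
    simp only [Function.onFun]
    rw [Set.disjoint_left]
    intro T hp hq
    exact hpq (hφinj (sortPerm_unique hp.2 hq.2))
  have hFmeas : ∀ p, MeasurableSet (F p) :=
    fun p => hAmeas.preimage (comp_perm_measurePreserving (φ p)).measurable
  have hsub : ∀ p, F p ⊆ Set.univ.pi fun i => Set.Ioo (l i) (u i) := by
    intro p T hT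
    rw [Set.mem_univ_pi]
    intro i
    have h1 := hT.1 ((φ p).symm i)
    have h2 : (fun T : Fin k → ℝ => T ∘ φ p) T ((φ p).symm i) = T i := by simp
    rw [h2] at h1
    have hli : l ((φ p).symm i) = l i := by
      simp only [hl]; exact if_congr (hblock' p i) rfl rfl
    have hui : u ((φ p).symm i) = u i := by
      simp only [hu]; exact if_congr (hblock' p i) rfl rfl
    rwa [hli, hui] at h1
  have hUnion : ((n'.factorial : ℝ≥0∞) * ((k - n').factorial : ℝ≥0∞)) * volume A
      = volume (⋃ p, F p) := by
    rw [measure_iUnion hFdisj hFmeas, tsum_fintype]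
    simp_rw [hFvol]
    rw [Finset.sum_const, Finset.card_univ, Fintype.card_prod, Fintype.card_perm,
      Fintype.card_perm, nsmul_eq_mul, Nat.cast_mul, Fintype.card_fin, Fintype.card_fin]
  have hboxvol : volume (Set.univ.pi fun i : Fin k => Set.Ioo (l i) (u i))
      = ENNReal.ofReal (t - t') ^ n' * ENNReal.ofReal (t' - tstar) ^ (k - n') := by
    rw [volume_pi_pi]
    have : ∀ i : Fin k, volume (Set.Ioo (l i) (u i))
        = if (i:ℕ) < n' then ENNReal.ofReal (t - t') else ENNReal.ofReal (t' - tstar) := by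
      intro i
      by_cases h : (i:ℕ) < n' <;> simp [hl, hu, h, Real.volume_Ioo]
    rw [Finset.prod_congr rfl fun i _ => this i, Finset.prod_ite, Finset.prod_const,
      Finset.prod_const]
    have hcard : (Finset.univ.filter fun i : Fin k => (i:ℕ) < n').card = n' := by
      have : (Finset.univ.filter fun i : Fin k => (i:ℕ) < n')
          = Finset.map (Fin.castLEEmb hn) Finset.univ := by
        ext i
        simp only [Finset.mem_filter, Finset.mem_univ, true_and, Finset.mem_map]
        constructor
        · intro h
          exact ⟨⟨(i:ℕ), h⟩, by simp [Fin.castLEEmb, Fin.ext_iff]⟩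
        · rintro ⟨a, rfl⟩
          simpa [Fin.castLEEmb] using a.isLt
      rw [this, Finset.card_map, Finset.card_univ, Fintype.card_fin]
    have hcard2 : (Finset.univ.filter fun i : Fin k => ¬ (i:ℕ) < n').card = k - n' := by
      have := Finset.card_filter_add_card_filter_not
        (s := (Finset.univ : Finset (Fin k))) (p := fun i : Fin k => (i:ℕ) < n')
      rw [Finset.card_univ, Fintype.card_fin, hcard] at this
      omega
    rw [hcard, hcard2]
  calc ((n'.factorial : ℝ≥0∞) * ((k - n').factorial : ℝ≥0∞)) * volume A
      = volume (⋃ p, F p) := hUnion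
    _ ≤ volume (Set.univ.pi fun i : Fin k => Set.Ioo (l i) (u i)) :=
        measure_mono (Set.iUnion_subset hsub)
    _ = _ := hboxvol

lemma gauss_int {b : ℝ} (hb : 0 < b) :
    Integrable (fun v : EuclideanSpace ℝ (Fin 3) => Real.exp (-b * ‖v‖^2)) := by
  have h := (GaussianFourier.integrable_cexp_neg_mul_sq_norm_add
    (V := EuclideanSpace ℝ (Fin 3)) (b := (b : ℂ)) (by simpa using hb) 0 0).norm
  apply h.congr
  filter_upwards with v
  rw [Complex.norm_exp]
  norm_num
  left
  norm_cast

lemma sqrt_mul_le_exp {β : ℝ} (hβ : 0 < β) (x : ℝ) (hx : 0 ≤ x) :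
    Real.sqrt (β/8) * x ≤ Real.exp ((β/8) * x^2) := by
  set s := Real.sqrt (β/8) with hs
  have hs0 : 0 ≤ s := Real.sqrt_nonneg _
  have h1 : (β/8) * x^2 = (s*x)^2 := by
    rw [mul_pow, hs, Real.sq_sqrt (by positivity)]
  rw [h1]
  have h2 := Real.add_one_le_exp ((s*x)^2)
  nlinarith [sq_nonneg (s*x - 1), mul_nonneg hs0 hx]

set_option maxHeartbeats 1000000 in
/-- Analytic core of Lemma 3.1 (a priori bound of Lanford type): for every `β > 0`
there is `C₁ > 0`, depending only on `β`, such that for all integers `k ≥ 1`,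
`0 ≤ n' ≤ k` and reals `t* ≤ t' ≤ t`, the integral over the ordered time simplex
`{t > t₁ > ⋯ > t_k > t*, t_{n'} > t' > t_{n'+1}}` (conventions `t₀ = t`,
`t_{k+1} = t*`) of the velocity integral
`∫_{ℝ^{3k}} ∏_{i=1}^k e^{−(β/4)|v_i|²}[(1+k)|v_i| + √(2k(1+k)/(eβ))] dv₁⋯dv_k`
is at most `e · C₁^k (t − t')^{n'} (t' − t*)^{k−n'}`. -/
theorem a_priori_cluster_bound (β : ℝ) (hβ : 0 < β) :
    ∃ C₁ : ℝ, 0 < C₁ ∧ ∀ (k n' : ℕ) (_ : 1 ≤ k) (_ : n' ≤ k)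
      (tstar t' t : ℝ) (_ : tstar ≤ t') (_ : t' ≤ t),
      (∫ T : Fin k → ℝ in
          {T : Fin k → ℝ |
            StrictAnti (Fin.snoc (Fin.cons t T) tstar : Fin (k + 2) → ℝ) ∧
            t' < (Fin.snoc (Fin.cons t T) tstar : Fin (k + 2) → ℝ) ⟨n', by omega⟩ ∧
            (Fin.snoc (Fin.cons t T) tstar : Fin (k + 2) → ℝ) ⟨n' + 1, by omega⟩ < t'},
        ∫ v : Fin k → EuclideanSpace ℝ (Fin 3),
          ∏ i : Fin k,
            Real.exp (-(β / 4) * ‖v i‖ ^ 2) *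
              ((1 + (k : ℝ)) * ‖v i‖ +
                Real.sqrt (2 * k * (1 + (k : ℝ)) / (Real.exp 1 * β)))) ≤
        Real.exp 1 * C₁ ^ k * (t - t') ^ n' * (t' - tstar) ^ (k - n') := by
  classical
  set sβ : ℝ := Real.sqrt (β/8) with hsβ
  have hsβ0 : 0 < sβ := Real.sqrt_pos.mpr (by positivity)
  set D : ℝ := sβ⁻¹ + Real.sqrt (2/β) with hD
  have hD0 : 0 < D := by positivity
  set Gv : ℝ := ∫ v : EuclideanSpace ℝ (Fin 3), Real.exp (-(β/8) * ‖v‖^2) with hGv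
  have hGv0 : 0 ≤ Gv := integral_nonneg fun v => (Real.exp_pos _).le
  clear_value sβ D Gv
  have hDG : (0:ℝ) ≤ D * Gv := mul_nonneg hD0.le hGv0
  refine ⟨2 * Real.exp 1 * (D * Gv + 1), by nlinarith [Real.exp_pos 1], ?_⟩
  intro k n' hk1 hn tstar t' t ht1 ht2
  set K : ℝ := (k : ℝ) with hK
  have hK0 : 0 ≤ K := Nat.cast_nonneg k
  set ck : ℝ := Real.sqrt (2 * k * (1 + (k : ℝ)) / (Real.exp 1 * β)) with hck
  have hck0 : 0 ≤ ck := Real.sqrt_nonneg _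
  -- pointwise bound on the velocity integrand
  have hfg : ∀ v : E3V, Real.exp (-(β / 4) * ‖v‖ ^ 2) * ((1 + K) * ‖v‖ + ck)
      ≤ ((1 + K) * D) * Real.exp (-(β/8) * ‖v‖^2) := by
    intro v
    set x : ℝ := ‖v‖ with hx
    have hx0 : 0 ≤ x := norm_nonneg _
    have hxe : Real.exp (-(β/4)*x^2) * x ≤ sβ⁻¹ * Real.exp (-(β/8)*x^2) := by
      have h0 : sβ * x ≤ Real.exp ((β/8) * x^2) := by
        rw [hsβ]; exact sqrt_mul_le_exp hβ x hx0
      have h1 : x ≤ sβ⁻¹ * Real.exp ((β/8) * x^2) := by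
        rw [← mul_le_mul_iff_right₀ hsβ0]
        calc sβ * x ≤ Real.exp ((β/8) * x^2) := h0
          _ = sβ * (sβ⁻¹ * Real.exp ((β/8) * x^2)) := by
              field_simp
      calc Real.exp (-(β/4)*x^2) * x
          ≤ Real.exp (-(β/4)*x^2) * (sβ⁻¹ * Real.exp ((β/8) * x^2)) :=
            mul_le_mul_of_nonneg_left h1 (Real.exp_pos _).le
        _ = sβ⁻¹ * Real.exp (-(β/4)*x^2 + (β/8) * x^2) := by
            rw [Real.exp_add]; ring
        _ = sβ⁻¹ * Real.exp (-(β/8)*x^2) := by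
            rw [show -(β/4)*x^2 + (β/8) * x^2 = -(β/8)*x^2 by ring]
    have hck_le : ck ≤ (1 + K) * Real.sqrt (2/β) := by
      have he1 : (1:ℝ) ≤ Real.exp 1 := by
        have := Real.add_one_le_exp (1:ℝ); linarith
      have hinner : 2 * K * (1 + K) / (Real.exp 1 * β) ≤ (1 + K)^2 * (2/β) := by
        rw [div_le_iff₀ (by positivity)]
        have hexp0 : (0:ℝ) < Real.exp 1 := Real.exp_pos 1
        have hrw : (1 + K)^2 * (2/β) * (Real.exp 1 * β) = (1 + K)^2 * 2 * Real.exp 1 := by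
          field_simp
        rw [hrw]
        nlinarith [mul_nonneg hK0 hK0]
      calc ck ≤ Real.sqrt ((1 + K)^2 * (2/β)) := Real.sqrt_le_sqrt hinner
        _ = (1 + K) * Real.sqrt (2/β) := by
            rw [Real.sqrt_mul (sq_nonneg _), Real.sqrt_sq (by positivity)]
    have hexp_le : Real.exp (-(β/4)*x^2) ≤ Real.exp (-(β/8)*x^2) :=
      Real.exp_le_exp.mpr (by nlinarith [sq_nonneg x])
    calc Real.exp (-(β / 4) * x ^ 2) * ((1 + K) * x + ck)
        = (1 + K) * (Real.exp (-(β/4)*x^2) * x) + Real.exp (-(β/4)*x^2) * ck := by ring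
      _ ≤ (1 + K) * (sβ⁻¹ * Real.exp (-(β/8)*x^2))
            + Real.exp (-(β/8)*x^2) * ((1 + K) * Real.sqrt (2/β)) := by
          gcongr
      _ = ((1 + K) * D) * Real.exp (-(β/8)*x^2) := by rw [hD]; ring
  -- bound on the velocity integral
  have hVnonneg : (0:ℝ) ≤ ∫ v : Fin k → E3V,
      ∏ i : Fin k, Real.exp (-(β / 4) * ‖v i‖ ^ 2) * ((1 + K) * ‖v i‖ + ck) :=
    integral_nonneg fun v => Finset.prod_nonneg fun i _ =>
      mul_nonneg (Real.exp_pos _).le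
        (add_nonneg (mul_nonneg (by positivity) (norm_nonneg _)) hck0)
  have hVle : (∫ v : Fin k → E3V,
      ∏ i : Fin k, Real.exp (-(β / 4) * ‖v i‖ ^ 2) * ((1 + K) * ‖v i‖ + ck))
      ≤ ((1 + K) * D * Gv) ^ k := by
    have hint : Integrable (fun v : Fin k → E3V =>
        ∏ i : Fin k, ((1 + K) * D) * Real.exp (-(β/8) * ‖v i‖^2)) :=
      Integrable.fintype_prod (f := fun _ : Fin k => fun x : E3V =>
        ((1 + K) * D) * Real.exp (-(β/8) * ‖x‖^2))
        fun i => (gauss_int (by positivity)).const_mul _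
    calc (∫ v : Fin k → E3V,
        ∏ i : Fin k, Real.exp (-(β / 4) * ‖v i‖ ^ 2) * ((1 + K) * ‖v i‖ + ck))
        ≤ ∫ v : Fin k → E3V, ∏ i : Fin k, ((1 + K) * D) * Real.exp (-(β/8) * ‖v i‖^2) := by
          refine integral_mono_of_nonneg (ae_of_all _ fun v => ?_) hint
            (ae_of_all _ fun v => ?_)
          · exact Finset.prod_nonneg fun i _ =>
              mul_nonneg (Real.exp_pos _).le
                (add_nonneg (mul_nonneg (by positivity) (norm_nonneg _)) hck0)
          · exact Finset.prod_le_prod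
              (fun i _ => mul_nonneg (Real.exp_pos _).le
                (add_nonneg (mul_nonneg (by positivity) (norm_nonneg _)) hck0))
              (fun i _ => hfg (v i))
      _ = ((1 + K) * D * Gv) ^ k := by
          rw [volume_pi, integral_fintype_prod_eq_pow (ι := Fin k)
            (f := fun x : E3V => ((1 + K) * D) * Real.exp (-(β/8) * ‖x‖^2)),
            integral_const_mul, Fintype.card_fin, hGv, mul_assoc]
  -- the time-simplex set is contained in the two-block ordered set
  set A : Set (Fin k → ℝ) := {T | (∀ i : Fin k, T i ∈ Set.Ioo
      (if (i:ℕ) < n' then t' else tstar) (if (i:ℕ) < n' then t else t')) ∧ StrictAnti T}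
    with hA
  set S : Set (Fin k → ℝ) := {T : Fin k → ℝ |
      StrictAnti (Fin.snoc (Fin.cons t T) tstar : Fin (k + 2) → ℝ) ∧
      t' < (Fin.snoc (Fin.cons t T) tstar : Fin (k + 2) → ℝ) ⟨n', by omega⟩ ∧
      (Fin.snoc (Fin.cons t T) tstar : Fin (k + 2) → ℝ) ⟨n' + 1, by omega⟩ < t'} with hS
  have hsub : S ⊆ A := by
    intro T hT
    obtain ⟨ha, hb, hc⟩ := hT
    have hTi : ∀ i : Fin k,
        (Fin.snoc (Fin.cons t T) tstar : Fin (k+2) → ℝ) ⟨(i:ℕ)+1, by omega⟩ = T i := by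
      intro i
      have h : (⟨(i:ℕ)+1, by omega⟩ : Fin (k+2)) = Fin.castSucc (Fin.succ i) := by
        simp [Fin.ext_iff]
      rw [h, Fin.snoc_castSucc, Fin.cons_succ]
    have h0 : (Fin.snoc (Fin.cons t T) tstar : Fin (k+2) → ℝ) ⟨0, by omega⟩ = t := by
      have h : (⟨0, by omega⟩ : Fin (k+2)) = Fin.castSucc 0 := by simp [Fin.ext_iff]
      rw [h, Fin.snoc_castSucc, Fin.cons_zero]
    have hlast : (Fin.snoc (Fin.cons t T) tstar : Fin (k+2) → ℝ) ⟨k+1, by omega⟩ = tstar := by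
      have h : (⟨k+1, by omega⟩ : Fin (k+2)) = Fin.last (k+1) := by simp [Fin.ext_iff]
      rw [h, Fin.snoc_last]
    constructor
    · intro i
      by_cases hi : (i:ℕ) < n'
      · simp only [hi, if_pos]
        constructor
        · have hle : (⟨(i:ℕ)+1, by omega⟩ : Fin (k+2)) ≤ ⟨n', by omega⟩ := by
            rw [Fin.mk_le_mk]; omega
          have := ha.antitone hle
          rw [hTi i] at this
          exact lt_of_lt_of_le hb this
        · have hlt : (⟨0, by omega⟩ : Fin (k+2)) < ⟨(i:ℕ)+1, by omega⟩ := by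
            rw [Fin.mk_lt_mk]; omega
          have := ha hlt
          rw [hTi i, h0] at this
          exact this
      · simp only [hi, if_neg, not_false_iff]
        constructor
        · have hlt : (⟨(i:ℕ)+1, by omega⟩ : Fin (k+2)) < ⟨k+1, by omega⟩ := by
            rw [Fin.mk_lt_mk]; omega
          have := ha hlt
          rw [hTi i, hlast] at this
          exact this
        · have hle : (⟨n'+1, by omega⟩ : Fin (k+2)) ≤ ⟨(i:ℕ)+1, by omega⟩ := by
            rw [Fin.mk_le_mk]; omega
          have := ha.antitone hle
          rw [hTi i] at this
          exact lt_of_le_of_lt this hc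
    · intro i j hij
      have hlt : (⟨(i:ℕ)+1, by omega⟩ : Fin (k+2)) < ⟨(j:ℕ)+1, by omega⟩ := by
        rw [Fin.mk_lt_mk]
        have : (i:ℕ) < (j:ℕ) := hij
        omega
      have := ha hlt
      rwa [hTi i, hTi j] at this
  -- volume bound
  have hP1 : (0:ℝ) ≤ t - t' := by linarith
  have hP2 : (0:ℝ) ≤ t' - tstar := by linarith
  set Nr : ℝ := (n'.factorial : ℝ) * ((k - n').factorial : ℝ) with hNr
  have hNr0 : (0:ℝ) < Nr := by positivity
  have hSR : (volume S).toReal ≤ (t - t') ^ n' * (t' - tstar) ^ (k - n') / Nr := by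
    apply ENNReal.toReal_le_of_le_ofReal (by positivity)
    have hofReal : ENNReal.ofReal ((t - t') ^ n' * (t' - tstar) ^ (k - n') / Nr)
        = (ENNReal.ofReal (t - t') ^ n' * ENNReal.ofReal (t' - tstar) ^ (k - n'))
          / ((n'.factorial : ℝ≥0∞) * ((k - n').factorial : ℝ≥0∞)) := by
      rw [ENNReal.ofReal_div_of_pos hNr0, ENNReal.ofReal_mul (by positivity),
        ← ENNReal.ofReal_pow hP1, ← ENNReal.ofReal_pow hP2, hNr,
        ENNReal.ofReal_mul (by positivity), ENNReal.ofReal_natCast, ENNReal.ofReal_natCast]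
    rw [hofReal]
    rw [ENNReal.le_div_iff_mul_le
      (Or.inl (by
        simp only [ne_eq, mul_eq_zero, Nat.cast_eq_zero]
        push_neg
        exact ⟨Nat.factorial_ne_zero _, Nat.factorial_ne_zero _⟩))
      (Or.inl (ENNReal.mul_ne_top (ENNReal.natCast_ne_top _) (ENNReal.natCast_ne_top _)))]
    calc volume S * ((n'.factorial : ℝ≥0∞) * ((k - n').factorial : ℝ≥0∞))
        = ((n'.factorial : ℝ≥0∞) * ((k - n').factorial : ℝ≥0∞)) * volume S := mul_comm _ _
      _ ≤ ((n'.factorial : ℝ≥0∞) * ((k - n').factorial : ℝ≥0∞)) * volume A :=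
          mul_le_mul_right (measure_mono hsub) _
      _ ≤ ENNReal.ofReal (t - t') ^ n' * ENNReal.ofReal (t' - tstar) ^ (k - n') :=
          volume_ordered_twoBlock_le hn tstar t' t
  have hSR0 : (0:ℝ) ≤ (volume S).toReal := ENNReal.toReal_nonneg
  -- factorial estimates
  have hfact : (1 + K) ^ k ≤ Real.exp 1 * Real.exp 1 ^ k * (k.factorial : ℝ) := by
    have hx : (0:ℝ) ≤ K + 1 := by linarith
    have h := (div_le_iff₀ (by positivity : (0:ℝ) < ((k+1).factorial : ℝ))).mp
      (Real.pow_div_factorial_le_exp _ hx (k+1))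
    have h2 : (K + 1) ^ (k+1) = (K + 1) ^ k * (K + 1) := pow_succ _ _
    have h3 : (((k+1).factorial : ℕ) : ℝ) = (k.factorial : ℝ) * (K + 1) := by
      rw [Nat.factorial_succ]
      push_cast [hK]
      ring
    have h4 : Real.exp (K + 1) = Real.exp 1 * Real.exp 1 ^ k := by
      rw [Real.exp_add, Real.exp_one_pow, hK]
      ring
    have h5 : (K + 1) ^ k * (K + 1) ≤ (Real.exp 1 * Real.exp 1 ^ k * (k.factorial : ℝ)) * (K + 1) := by
      calc (K + 1) ^ k * (K + 1) = (K + 1) ^ (k+1) := (pow_succ _ _).symm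
        _ ≤ Real.exp (K + 1) * (((k+1).factorial : ℕ) : ℝ) := h
        _ = (Real.exp 1 * Real.exp 1 ^ k * (k.factorial : ℝ)) * (K + 1) := by
            rw [h3, h4]; ring
    have hKpos : (0:ℝ) < K + 1 := by linarith
    have := le_of_mul_le_mul_right h5 hKpos
    calc (1 + K) ^ k = (K + 1) ^ k := by ring_nf
      _ ≤ _ := this
  have hchoose : (k.factorial : ℝ) ≤ 2 ^ k * Nr := by
    have hc1 : k.choose n' ≤ 2 ^ k := by
      have h1 : k.choose n' ≤ ∑ m ∈ Finset.range (k+1), k.choose m :=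
        Finset.single_le_sum (f := fun m => k.choose m) (fun _ _ => Nat.zero_le _)
          (Finset.mem_range.mpr (by omega))
      rwa [Nat.sum_range_choose] at h1
    have hc2 : k.factorial = k.choose n' * (n'.factorial * (k - n').factorial) := by
      rw [← Nat.choose_mul_factorial_mul_factorial hn]
      ring
    have : k.factorial ≤ 2 ^ k * (n'.factorial * (k - n').factorial) := by
      rw [hc2]
      exact Nat.mul_le_mul_right _ hc1
    calc (k.factorial : ℝ) ≤ ((2 ^ k * (n'.factorial * (k - n').factorial) : ℕ) : ℝ) := by
          exact_mod_cast this
      _ = 2 ^ k * Nr := by push_cast [hNr]; ring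
  -- final assembly
  rw [setIntegral_const, smul_eq_mul]
  have hmain : (volume S).toReal * (∫ v : Fin k → E3V,
      ∏ i : Fin k, Real.exp (-(β / 4) * ‖v i‖ ^ 2) * ((1 + K) * ‖v i‖ + ck))
      ≤ ((t - t') ^ n' * (t' - tstar) ^ (k - n') / Nr) * ((1 + K) * D * Gv) ^ k :=
    mul_le_mul hSR hVle hVnonneg (by positivity)
  refine le_trans hmain ?_
  set P : ℝ := (t - t') ^ n' * (t' - tstar) ^ (k - n') with hP
  have hP0 : 0 ≤ P := by positivity
  have hkey : ((1 + K) * D * Gv) ^ k ≤ Real.exp 1 * (2 * Real.exp 1 * (D * Gv)) ^ k * Nr := by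
    have h1 : ((1 + K) * D * Gv) ^ k = (1 + K) ^ k * (D * Gv) ^ k := by
      rw [← mul_pow, mul_assoc]
    have hDG0 : (0:ℝ) ≤ (D * Gv) ^ k := pow_nonneg hDG k
    calc ((1 + K) * D * Gv) ^ k = (1 + K) ^ k * (D * Gv) ^ k := h1
      _ ≤ (Real.exp 1 * Real.exp 1 ^ k * (k.factorial : ℝ)) * (D * Gv) ^ k := by
          exact mul_le_mul_of_nonneg_right hfact hDG0
      _ ≤ (Real.exp 1 * Real.exp 1 ^ k * (2 ^ k * Nr)) * (D * Gv) ^ k := by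
          refine mul_le_mul_of_nonneg_right ?_ hDG0
          exact mul_le_mul_of_nonneg_left hchoose (by positivity)
      _ = Real.exp 1 * (2 * Real.exp 1 * (D * Gv)) ^ k * Nr := by
          rw [mul_pow, mul_pow]
          ring
  calc P / Nr * ((1 + K) * D * Gv) ^ k
      ≤ P / Nr * (Real.exp 1 * (2 * Real.exp 1 * (D * Gv)) ^ k * Nr) := by
        exact mul_le_mul_of_nonneg_left hkey (by positivity)
    _ = Real.exp 1 * (2 * Real.exp 1 * (D * Gv)) ^ k * P := by
        field_simp
    _ ≤ Real.exp 1 * (2 * Real.exp 1 * (D * Gv + 1)) ^ k * P := by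
        have hbase : 2 * Real.exp 1 * (D * Gv) ≤ 2 * Real.exp 1 * (D * Gv + 1) := by
          have := Real.exp_pos 1
          nlinarith
        have hbase0 : (0:ℝ) ≤ 2 * Real.exp 1 * (D * Gv) :=
          mul_nonneg (by positivity) hDG
        exact mul_le_mul_of_nonneg_right
          (mul_le_mul_of_nonneg_left (pow_le_pow_left₀ hbase0 hbase k) (Real.exp_pos 1).le)
          hP0
    _ = Real.exp 1 * (2 * Real.exp 1 * (D * Gv + 1)) ^ k * (t - t') ^ n'
          * (t' - tstar) ^ (k - n') := by rw [hP]; ring
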